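/- Let m ≤ -1, M ≤ -m(b+1), a ∈ ℝ, 0 ≤ b < 1. Then there is no C³ function f : [0,∞) → ℝ satisfying f''' + ((m+1)/2)·f·f'' + m·(1-(f')²) + M·(1-f') = 0 with f(0)=a, f'(0)=b, lim_{t→∞} f'(t)=1, and f'' > 0 on [0,∞) (i.e., no convex solution exists). -/

import Mathlib

open Filter Set

theorem stmt_13 (m M a b : ℝ) (hm : m ≤ -1) (hM : M ≤ -m * (b + 1))
    (hb0 : 0 ≤ b) (hb1 : b < 1) :
    ¬ ∃ f : ℝ → ℝ, ContDiff ℝ 3 f ∧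
      (∀ t : ℝ, 0 ≤ t →
        deriv (deriv (deriv f)) t + (m + 1) / 2 * f t * deriv (deriv f) t
          + m * (1 - (deriv f t) ^ 2) + M * (1 - deriv f t) = 0) ∧
      f 0 = a ∧ deriv f 0 = b ∧ Tendsto (deriv f) atTop (nhds 1) ∧
      (∀ t : ℝ, 0 ≤ t → 0 < deriv (deriv f) t) := by
  rintro ⟨f, hf, heq, hf0, hfd0, htend, hpos⟩
  have hf3 : ContDiff ℝ (2 + 1 : ℕ) f := by exact_mod_cast hf
  have hd1 : Differentiable ℝ f := hf.differentiable (by norm_num)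
  have hc2 : ContDiff ℝ (1 + 1 : ℕ) (deriv f) :=
    (contDiff_succ_iff_deriv.mp (by exact_mod_cast hf3)).2.2
  have hd2 : Differentiable ℝ (deriv f) := hc2.differentiable (by norm_num)
  have hc3 : ContDiff ℝ (0 + 1 : ℕ) (deriv (deriv f)) :=
    (contDiff_succ_iff_deriv.mp (by exact_mod_cast hc2)).2.2
  have hd3 : Differentiable ℝ (deriv (deriv f)) := hc3.differentiable (by norm_num)
  have hmono : StrictMonoOn (deriv f) (Ici (0:ℝ)) := by
    apply strictMonoOn_of_deriv_pos (convex_Ici 0) hd2.continuous.continuousOn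
    intro x hx
    rw [interior_Ici] at hx
    exact hpos x (le_of_lt hx)
  have hlt : ∀ t : ℝ, 0 ≤ t → deriv f t < 1 := by
    intro t ht
    have h1 : deriv f t < deriv f (t + 1) :=
      hmono (mem_Ici.2 ht) (mem_Ici.2 (by linarith)) (by linarith)
    have h2 : deriv f (t + 1) ≤ 1 := by
      apply ge_of_tendsto htend
      filter_upwards [eventually_ge_atTop (t + 1)] with s hs
      exact hmono.monotoneOn (mem_Ici.2 (by linarith)) (mem_Ici.2 (by linarith)) hs
    linarith
  have hgeb : ∀ t : ℝ, 0 ≤ t → b ≤ deriv f t := by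
    intro t ht
    have := hmono.monotoneOn (mem_Ici.2 le_rfl) (mem_Ici.2 ht) ht
    rwa [hfd0] at this
  have hfd1 : 0 < deriv f 1 := by
    have := hmono (mem_Ici.2 le_rfl) (mem_Ici.2 (by norm_num)) one_pos
    rw [hfd0] at this; linarith
  -- generic linear lower bound lemma
  have key : ∀ (g : ℝ → ℝ) (T : ℝ), Differentiable ℝ g → Continuous (deriv g) →
      (∀ x, T < x → deriv g T ≤ deriv g x) →
      ∀ t, T ≤ t → g T + deriv g T * (t - T) ≤ g t := by
    intro g T hdg hcg hmg t ht
    have hmonog : MonotoneOn (fun s => g s - deriv g T * s) (Ici T) := by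
      apply monotoneOn_of_deriv_nonneg (convex_Ici T)
        (Continuous.continuousOn (by have := hdg.continuous; fun_prop))
        (Differentiable.differentiableOn (by fun_prop))
      intro x hx
      rw [interior_Ici] at hx
      have hder : deriv (fun s => g s - deriv g T * s) x = deriv g x - deriv g T := by
        have := ((hdg x).hasDerivAt.sub ((hasDerivAt_id x).const_mul (deriv g T))).deriv
        convert this using 1
        · rfl
        · simp
      rw [hder, sub_nonneg]
      exact hmg x hx
    have := hmonog (mem_Ici.2 le_rfl) (mem_Ici.2 ht) ht
    simp only at this
    nlinarith
  have hlin : ∀ t : ℝ, 1 ≤ t → f 1 + deriv f 1 * (t - 1) ≤ f t := by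
    apply key f 1 hd1 hd2.continuous
    intro x hx
    exact (hmono (mem_Ici.2 (by norm_num)) (mem_Ici.2 (by linarith)) hx).le
  obtain ⟨T, hT1, hfT⟩ : ∃ T : ℝ, 1 ≤ T ∧ ∀ t, T ≤ t → 0 ≤ f t := by
    refine ⟨max 1 (1 - f 1 / deriv f 1), le_max_left _ _, fun t ht => ?_⟩
    have h2 : 1 - f 1 / deriv f 1 ≤ t := le_trans (le_max_right _ _) ht
    have h3 : -(f 1) / deriv f 1 ≤ t - 1 := by
      rw [neg_div]; linarith
    rw [div_le_iff₀ hfd1] at h3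
    nlinarith [hlin t (le_trans (le_max_left _ _) ht)]
  have hT0 : (0:ℝ) ≤ T := by linarith
  -- f''' ≥ 0 beyond T
  have h3nn : ∀ t : ℝ, T ≤ t → 0 ≤ deriv (deriv (deriv f)) t := by
    intro t ht
    have ht0 : (0:ℝ) ≤ t := le_trans hT0 ht
    have hp1 : deriv f t < 1 := hlt t ht0
    have hpb : b ≤ deriv f t := hgeb t ht0
    have hft : 0 ≤ f t := hfT t ht
    have hft'' : 0 < deriv (deriv f) t := hpos t ht0
    have h1 : (m + 1) / 2 * f t * deriv (deriv f) t ≤ 0 := by nlinarith [mul_nonneg hft hft''.le]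
    have h2 : m * (1 - (deriv f t) ^ 2) + M * (1 - deriv f t) ≤ 0 := by
      nlinarith [mul_nonneg (sub_nonneg.2 hp1.le)
        (mul_nonneg (neg_nonneg.2 (by linarith : m ≤ 0)) (sub_nonneg.2 hpb))]
    linarith [heq t ht0]
  have hmono2 : MonotoneOn (deriv (deriv f)) (Ici T) := by
    apply monotoneOn_of_deriv_nonneg (convex_Ici T) (Continuous.continuousOn (by fun_prop))
      (Differentiable.differentiableOn (by fun_prop))
    intro x hx
    rw [interior_Ici] at hx
    exact h3nn x hx.le
  have hcpos : 0 < deriv (deriv f) T := hpos T hT0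
  have hlin2 : ∀ t : ℝ, T ≤ t →
      deriv f T + deriv (deriv f) T * (t - T) ≤ deriv f t := by
    apply key (deriv f) T hd2 hd3.continuous
    intro x hx
    exact hmono2 (mem_Ici.2 le_rfl) (mem_Ici.2 hx.le) hx.le
  obtain ⟨x, hxT, hxval⟩ : ∃ x, T ≤ x ∧
      deriv (deriv f) T * (x - T) = 1 - deriv f T := by
    refine ⟨T + (1 - deriv f T) / deriv (deriv f) T, ?_, by field_simp [hcpos.ne']; ring⟩
    have h := hlt T hT0
    have : 0 ≤ (1 - deriv f T) / deriv (deriv f) T :=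
      div_nonneg (by linarith) hcpos.le
    linarith
  have h1 := hlin2 x hxT
  have h2 := hlt x (le_trans hT0 hxT)
  linarith [hxval]
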